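/- Let m, n be positive integers, ε > 0, K ∈ ℝ^{m×n} with strictly positive entries, a ∈ ℝ^m with strictly positive entries, b^d, b^u ∈ ℝ^n, and fix g, h ∈ ℝ^n. Then the function f ↦ ⟨f,a⟩ + ⟨g,b^d⟩ + ⟨h,b^u⟩ - ε·Σ_{ij} exp(f_i/ε)·K_{ij}·exp((g_j+h_j)/ε) on ℝ^m has a unique maximizer, given coordinatewise by f*_i = ε·log a_i - ε·log( Σ_j K_{ij}·exp((g_j+h_j)/ε) ). -/

import Mathlib

open Real

lemma dbot_coord_key (ε a S t t0 : ℝ) (hε : 0 < ε) (ha : 0 < a) (hS : 0 < S)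
    (ht0 : t0 = ε * Real.log a - ε * Real.log S) :
    t * a - ε * (Real.exp (t / ε) * S) ≤ t0 * a - ε * (Real.exp (t0 / ε) * S) ∧
    (t ≠ t0 → t * a - ε * (Real.exp (t / ε) * S) < t0 * a - ε * (Real.exp (t0 / ε) * S)) := by
  have hε' : ε ≠ 0 := ne_of_gt hε
  have ht0e : Real.exp (t0 / ε) = a / S := by
    have : t0 / ε = Real.log (a / S) := by
      rw [ht0, Real.log_div (ne_of_gt ha) (ne_of_gt hS)]
      field_simp
    rw [this, Real.exp_log (div_pos ha hS)]
  have hsplit : Real.exp (t / ε) = Real.exp (t0 / ε) * Real.exp ((t - t0) / ε) := by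
    rw [← Real.exp_add]
    ring_nf
  have hval : ε * (Real.exp (t0 / ε) * S) = ε * a := by
    rw [ht0e]; field_simp
  set x := (t - t0) / ε with hx
  have hxt : t = t0 + ε * x := by rw [hx]; field_simp; ring
  have hmain : ε * (Real.exp (t / ε) * S) = ε * a * Real.exp x := by
    rw [hsplit, ht0e]; field_simp
  constructor
  · have hle : x + 1 ≤ Real.exp x := Real.add_one_le_exp x
    have : ε * a * (x + 1) ≤ ε * a * Real.exp x :=
      mul_le_mul_of_nonneg_left hle (by positivity)
    rw [hmain, hval]
    nlinarith [this]
  · intro hne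
    have hxne : x ≠ 0 := by
      intro hx0
      apply hne
      rw [hxt, hx0, mul_zero, add_zero]
    have hlt : x + 1 < Real.exp x := Real.add_one_lt_exp hxne
    have : ε * a * (x + 1) < ε * a * Real.exp x :=
      mul_lt_mul_of_pos_left hlt (by positivity)
    rw [hmain, hval]
    nlinarith [this]

/-- for fixed g, h, the dual functional has a unique maximizer in
f, given by f*_i = ε·log a_i - ε·log(Σ_j K_ij·exp((g_j+h_j)/ε)). -/
theorem dbot_dual_f_update
    (m n : ℕ) (hm : 0 < m) (hn : 0 < n)
    (ε : ℝ) (hε : 0 < ε)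
    (K : Matrix (Fin m) (Fin n) ℝ) (hK : ∀ i j, 0 < K i j)
    (a : Fin m → ℝ) (ha : ∀ i, 0 < a i)
    (bd bu : Fin n → ℝ) (g h : Fin n → ℝ)
    (L : (Fin m → ℝ) → ℝ)
    (hL : ∀ f : Fin m → ℝ,
      L f = (∑ i, f i * a i) + (∑ j, g j * bd j) + (∑ j, h j * bu j)
        - ε * ∑ i, ∑ j, Real.exp (f i / ε) * K i j * Real.exp ((g j + h j) / ε))
    (fstar : Fin m → ℝ)
    (hfstar : ∀ i, fstar i = ε * Real.log (a i)
        - ε * Real.log (∑ j, K i j * Real.exp ((g j + h j) / ε))) :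
    IsMaxOn L Set.univ fstar ∧
    (∀ f : Fin m → ℝ, IsMaxOn L Set.univ f → f = fstar) := by
  set S : Fin m → ℝ := fun i => ∑ j, K i j * Real.exp ((g j + h j) / ε) with hS
  have hSpos : ∀ i, 0 < S i := by
    intro i
    apply Finset.sum_pos
    · intro j _
      exact mul_pos (hK i j) (Real.exp_pos _)
    · exact Finset.univ_nonempty_iff.mpr ⟨⟨0, hn⟩⟩
  set C : ℝ := (∑ j, g j * bd j) + (∑ j, h j * bu j) with hC
  have hL' : ∀ f : Fin m → ℝ,
      L f = (∑ i, (f i * a i - ε * (Real.exp (f i / ε) * S i))) + C := by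
    intro f
    rw [hL]
    have hinner : ∀ i : Fin m, (∑ j, Real.exp (f i / ε) * K i j * Real.exp ((g j + h j) / ε))
        = Real.exp (f i / ε) * S i := by
      intro i
      rw [hS, Finset.mul_sum]
      exact Finset.sum_congr rfl (fun j _ => by ring)
    rw [Finset.sum_congr rfl (fun i _ => hinner i), Finset.mul_sum,
      Finset.sum_sub_distrib]
    ring
  have hkey : ∀ (i : Fin m) (t : ℝ),
      t * a i - ε * (Real.exp (t / ε) * S i)
        ≤ fstar i * a i - ε * (Real.exp (fstar i / ε) * S i) ∧
      (t ≠ fstar i → t * a i - ε * (Real.exp (t / ε) * S i)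
        < fstar i * a i - ε * (Real.exp (fstar i / ε) * S i)) :=
    fun i t => dbot_coord_key ε (a i) (S i) t (fstar i) hε (ha i) (hSpos i) (hfstar i)
  have hmax : IsMaxOn L Set.univ fstar := by
    intro f _
    simp only [Set.mem_setOf_eq]
    rw [hL' f, hL' fstar]
    have := Finset.sum_le_sum (fun i (_ : i ∈ Finset.univ) => (hkey i (f i)).1)
    linarith
  refine ⟨hmax, ?_⟩
  intro f hf
  by_contra hne
  have : ∃ i, f i ≠ fstar i := by
    by_contra hall
    push_neg at hall
    exact hne (funext hall)
  obtain ⟨i0, hi0⟩ := this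
  have hlt : L f < L fstar := by
    rw [hL' f, hL' fstar]
    have := Finset.sum_lt_sum (fun i (_ : i ∈ Finset.univ) => (hkey i (f i)).1)
      ⟨i0, Finset.mem_univ i0, (hkey i0 (f i0)).2 hi0⟩
    linarith
  have := hf (Set.mem_univ fstar)
  simp only [Set.mem_setOf_eq] at this
  linarith
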